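/- Let (𝒳, ℬ, P, f) be a measure-preserving system with decay of correlations against L¹: there is a Banach space 𝒞 of functions and a non-increasing rate γ : ℕ → ℝ with γ(n) → 0, such that for all φ ∈ 𝒞 and all measurable ψ, |∫ φ·(ψ∘fⁿ) dP − ∫φ dP ∫ψ dP| ≤ ‖φ‖_𝒞 ‖ψ‖_{L¹} γ(n). Then for any A ∈ ℬ with 1_A ∈ 𝒞 and positive integers s, t, t', m with t < m: |P(𝒲_{0,s+t'+m}(A)) − P(𝒲_{0,s}(A) ∩ 𝒲_{s+t',m}(A))| ≤ t'·[P(A) + ‖1_A‖_𝒞 · γ(t)] · P(𝒲_{0,m−t}(A)). -/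

import Mathlib

open MeasureTheory

/-- The event of avoiding `A` during the time window `[s, s+ℓ)`. -/
def avoidWindow {X : Type*} (T : X → X) (s ℓ : ℕ) (A : Set X) : Set X :=
  ⋂ i ∈ Finset.Ico s (s + ℓ), T^[i] ⁻¹' Aᶜ

lemma mem_avoidWindow_iff {X : Type*} (f : X → X) (s ℓ : ℕ) (A : Set X) (x : X) :
    x ∈ avoidWindow f s ℓ A ↔ ∀ i, s ≤ i → i < s + ℓ → f^[i] x ∉ A := by
  simp [avoidWindow, and_imp]

lemma avoidWindow_measurableSet {X : Type*} [MeasurableSpace X] {f : X → X}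
    (hf : Measurable f) (s ℓ : ℕ) {A : Set X} (hA : MeasurableSet A) :
    MeasurableSet (avoidWindow f s ℓ A) :=
  Finset.measurableSet_biInter _ fun i _ => (hf.iterate i) hA.compl

lemma avoidWindow_subset_of_subset {X : Type*} (f : X → X) {s ℓ s' ℓ' : ℕ}
    (h : ∀ i, s' ≤ i → i < s' + ℓ' → s ≤ i ∧ i < s + ℓ) (A : Set X) :
    avoidWindow f s ℓ A ⊆ avoidWindow f s' ℓ' A := by
  intro x hx
  rw [mem_avoidWindow_iff] at hx ⊢
  intro i hi1 hi2
  exact hx i (h i hi1 hi2).1 (h i hi1 hi2).2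

lemma mem_avoidWindow_shift {X : Type*} (f : X → X) (k ℓ : ℕ) (A : Set X) (x : X)
    (hx : x ∈ avoidWindow f k ℓ A) : f^[k] x ∈ avoidWindow f 0 ℓ A := by
  rw [mem_avoidWindow_iff] at hx ⊢
  intro i _ hi2
  rw [← Function.iterate_add_apply]
  exact hx (i + k) (by omega) (by omega)

theorem time_gap_estimate_L1 {X : Type*} [MeasurableSpace X] (μ : Measure X)
    [IsProbabilityMeasure μ] (f : X → X) (hf : MeasurePreserving f μ μ)
    (𝒞 : Set (X → ℝ)) (N : (X → ℝ) → ℝ) (γ : ℕ → ℝ)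
    (hγmono : Antitone γ) (hγ0 : Filter.Tendsto γ Filter.atTop (nhds 0))
    (hdecay : ∀ φ ∈ 𝒞, ∀ ψ : X → ℝ, Integrable ψ μ → ∀ n : ℕ,
      |(∫ x, φ x * ψ (f^[n] x) ∂μ) - (∫ x, φ x ∂μ) * ∫ x, ψ x ∂μ| ≤
        N φ * (∫ x, |ψ x| ∂μ) * γ n)
    (A : Set X) (hA : MeasurableSet A)
    (hind : A.indicator (fun _ => (1 : ℝ)) ∈ 𝒞)
    (s t t' m : ℕ) (hs : 0 < s) (ht : 0 < t) (ht' : 0 < t') (hm : 0 < m)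
    (htm : t < m) :
    |(μ (avoidWindow f 0 (s + t' + m) A)).toReal -
        (μ (avoidWindow f 0 s A ∩ avoidWindow f (s + t') m A)).toReal| ≤
      (t' : ℝ) * ((μ A).toReal + N (A.indicator fun _ => (1 : ℝ)) * γ t) *
        (μ (avoidWindow f 0 (m - t) A)).toReal := by
  have hfm : Measurable f := hf.measurable
  set φ := A.indicator (fun _ => (1 : ℝ)) with hφ
  set W0 := avoidWindow f 0 (s + t' + m) A with hW0def
  set W1 := avoidWindow f 0 s A with hW1def
  set W2 := avoidWindow f (s + t') m A with hW2def
  set W3 := avoidWindow f 0 (m - t) A with hW3def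
  have mW0 : MeasurableSet W0 := avoidWindow_measurableSet hfm _ _ hA
  have mW1 : MeasurableSet W1 := avoidWindow_measurableSet hfm _ _ hA
  have mW2 : MeasurableSet W2 := avoidWindow_measurableSet hfm _ _ hA
  have mW3 : MeasurableSet W3 := avoidWindow_measurableSet hfm _ _ hA
  set ψ := W3.indicator (fun _ => (1 : ℝ)) with hψ
  have hψint : Integrable ψ μ := (integrable_const (1 : ℝ)).indicator mW3
  have hψval : ∫ x, ψ x ∂μ = (μ W3).toReal := by
    rw [hψ, integral_indicator_const _ mW3, smul_eq_mul, mul_one, measureReal_def]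
  have hψabs : ∫ x, |ψ x| ∂μ = (μ W3).toReal := by
    have h1 : ∀ x, |ψ x| = ψ x := fun x =>
      abs_of_nonneg (Set.indicator_nonneg (fun _ _ => zero_le_one) x)
    simp_rw [h1]
    exact hψval
  have hφval : ∫ x, φ x ∂μ = (μ A).toReal := by
    rw [hφ, integral_indicator_const _ hA, smul_eq_mul, mul_one, measureReal_def]
  have hγnn : ∀ k, 0 ≤ γ k := fun k =>
    le_of_tendsto hγ0 (Filter.eventually_atTop.2 ⟨k, fun j hj => hγmono hj⟩)
  -- nonnegativity of N φ * (μ W3).toReal * γ t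
  have hNt : 0 ≤ N φ * (μ W3).toReal * γ t := by
    have := hdecay φ hind ψ hψint t
    rw [hψabs] at this
    exact le_trans (abs_nonneg _) this
  -- key term bound
  have hterm : ∀ i ∈ Finset.Ico s (s + t'),
      (μ (f^[i] ⁻¹' A ∩ W2)).toReal ≤
        ((μ A).toReal + N φ * γ t) * (μ W3).toReal := by
    intro i hi
    rw [Finset.mem_Ico] at hi
    set n := max (i + t) (s + t') - i with hn
    have hnt : t ≤ n := by omega
    have hsub : f^[i] ⁻¹' A ∩ W2 ⊆ f^[i] ⁻¹' (A ∩ f^[n] ⁻¹' W3) := by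
      rintro x ⟨hxA, hxW⟩
      refine ⟨hxA, ?_⟩
      have hx2 : x ∈ avoidWindow f (n + i) (m - t) A := by
        refine avoidWindow_subset_of_subset f (fun j hj1 hj2 => ?_) A hxW
        omega
      have := mem_avoidWindow_shift f (n + i) (m - t) A x hx2
      rw [Set.mem_preimage, ← Function.iterate_add_apply]
      exact this
    have hmeas1 : μ (f^[i] ⁻¹' A ∩ W2) ≤ μ (A ∩ f^[n] ⁻¹' W3) := by
      have hpre : μ (f^[i] ⁻¹' (A ∩ f^[n] ⁻¹' W3)) = μ (A ∩ f^[n] ⁻¹' W3) :=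
        (hf.iterate i).measure_preimage
          (hA.inter ((hfm.iterate n) mW3)).nullMeasurableSet
      exact hpre ▸ measure_mono hsub
    have hint : (μ (A ∩ f^[n] ⁻¹' W3)).toReal = ∫ x, φ x * ψ (f^[n] x) ∂μ := by
      have hptw : ∀ x, φ x * ψ (f^[n] x) =
          (A ∩ f^[n] ⁻¹' W3).indicator (fun _ => (1 : ℝ)) x := by
        intro x
        simp only [hφ, hψ, Set.indicator_apply, Set.mem_preimage, Set.mem_inter_iff]
        by_cases h1 : x ∈ A <;> by_cases h2 : f^[n] x ∈ W3 <;> simp [h1, h2]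
      simp_rw [hptw]
      rw [integral_indicator_const _ (hA.inter ((hfm.iterate n) mW3)), smul_eq_mul,
        mul_one, measureReal_def]
    have hdn := hdecay φ hind ψ hψint n
    rw [hψabs, hψval, hφval] at hdn
    have hdn' : ∫ x, φ x * ψ (f^[n] x) ∂μ ≤
        (μ A).toReal * (μ W3).toReal + N φ * (μ W3).toReal * γ n := by
      have := (abs_le.1 hdn).2
      linarith
    have hmul : N φ * (μ W3).toReal * γ n ≤ N φ * (μ W3).toReal * γ t := by
      rcases le_or_gt 0 (N φ * (μ W3).toReal) with h | h
      · exact mul_le_mul_of_nonneg_left (hγmono hnt) h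
      · calc N φ * (μ W3).toReal * γ n ≤ 0 := by nlinarith [hγnn n]
          _ ≤ N φ * (μ W3).toReal * γ t := hNt
    calc (μ (f^[i] ⁻¹' A ∩ W2)).toReal ≤ (μ (A ∩ f^[n] ⁻¹' W3)).toReal :=
          ENNReal.toReal_mono (measure_ne_top _ _) hmeas1
      _ = ∫ x, φ x * ψ (f^[n] x) ∂μ := hint
      _ ≤ (μ A).toReal * (μ W3).toReal + N φ * (μ W3).toReal * γ n := hdn'
      _ ≤ (μ A).toReal * (μ W3).toReal + N φ * (μ W3).toReal * γ t := by linarith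
      _ = ((μ A).toReal + N φ * γ t) * (μ W3).toReal := by ring
  -- inclusion W0 ⊆ W1 ∩ W2
  have hsubset0 : W0 ⊆ W1 ∩ W2 :=
    Set.subset_inter
      (avoidWindow_subset_of_subset f (fun j h1 h2 => by omega) A)
      (avoidWindow_subset_of_subset f (fun j h1 h2 => by omega) A)
  -- cover
  have hcover : W1 ∩ W2 ⊆ W0 ∪ ⋃ i ∈ Finset.Ico s (s + t'), (f^[i] ⁻¹' A ∩ W2) := by
    rintro x ⟨hx1, hx2⟩
    by_cases hx0 : x ∈ W0
    · exact Or.inl hx0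
    · right
      rw [hW0def, mem_avoidWindow_iff] at hx0
      push_neg at hx0
      obtain ⟨i, _, hi2, hxi⟩ := hx0
      have hi1 : s ≤ i := by
        by_contra h
        exact (mem_avoidWindow_iff f 0 s A x).1 hx1 i (by omega) (by omega) hxi
      have hi3 : i < s + t' := by
        by_contra h
        exact (mem_avoidWindow_iff f (s + t') m A x).1 hx2 i (by omega) (by omega) hxi
      exact Set.mem_biUnion (Finset.mem_coe.2 (Finset.mem_Ico.2 ⟨hi1, hi3⟩)) ⟨hxi, hx2⟩
  have hmeasle : μ (W1 ∩ W2) ≤ μ W0 + ∑ i ∈ Finset.Ico s (s + t'),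
      μ (f^[i] ⁻¹' A ∩ W2) := by
    calc μ (W1 ∩ W2) ≤ μ (W0 ∪ ⋃ i ∈ Finset.Ico s (s + t'), (f^[i] ⁻¹' A ∩ W2)) :=
          measure_mono hcover
      _ ≤ μ W0 + μ (⋃ i ∈ Finset.Ico s (s + t'), (f^[i] ⁻¹' A ∩ W2)) :=
          measure_union_le _ _
      _ ≤ μ W0 + ∑ i ∈ Finset.Ico s (s + t'), μ (f^[i] ⁻¹' A ∩ W2) := by
          gcongr
          exact measure_biUnion_finset_le _ _
  have h1 : (μ (W1 ∩ W2)).toReal ≤ (μ W0).toReal +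
      ∑ i ∈ Finset.Ico s (s + t'), (μ (f^[i] ⁻¹' A ∩ W2)).toReal := by
    have hne : (μ W0 + ∑ i ∈ Finset.Ico s (s + t'), μ (f^[i] ⁻¹' A ∩ W2)) ≠ ⊤ := by
      refine ENNReal.add_ne_top.2 ⟨measure_ne_top _ _, ?_⟩
      exact (ENNReal.sum_lt_top.2 fun i _ => measure_lt_top _ _).ne
    have := ENNReal.toReal_mono hne hmeasle
    rwa [ENNReal.toReal_add (measure_ne_top _ _)
      (ENNReal.sum_lt_top.2 fun i _ => measure_lt_top _ _).ne,
      ENNReal.toReal_sum fun i _ => measure_ne_top _ _] at this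
  have habs : |(μ W0).toReal - (μ (W1 ∩ W2)).toReal| =
      (μ (W1 ∩ W2)).toReal - (μ W0).toReal := by
    rw [abs_sub_comm, abs_of_nonneg]
    exact sub_nonneg.2 (ENNReal.toReal_mono (measure_ne_top _ _)
      (measure_mono hsubset0))
  rw [habs]
  have hsum : ∑ i ∈ Finset.Ico s (s + t'), (μ (f^[i] ⁻¹' A ∩ W2)).toReal ≤
      (t' : ℝ) * (((μ A).toReal + N φ * γ t) * (μ W3).toReal) := by
    calc ∑ i ∈ Finset.Ico s (s + t'), (μ (f^[i] ⁻¹' A ∩ W2)).toReal ≤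
        ∑ _i ∈ Finset.Ico s (s + t'), ((μ A).toReal + N φ * γ t) * (μ W3).toReal :=
          Finset.sum_le_sum hterm
      _ = (t' : ℝ) * (((μ A).toReal + N φ * γ t) * (μ W3).toReal) := by
          rw [Finset.sum_const, Nat.card_Ico, nsmul_eq_mul]
          congr 1
          norm_cast
          omega
  calc (μ (W1 ∩ W2)).toReal - (μ W0).toReal ≤
      ∑ i ∈ Finset.Ico s (s + t'), (μ (f^[i] ⁻¹' A ∩ W2)).toReal := by linarith
    _ ≤ (t' : ℝ) * (((μ A).toReal + N φ * γ t) * (μ W3).toReal) := hsum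
    _ = (t' : ℝ) * ((μ A).toReal + N φ * γ t) * (μ W3).toReal := by ring
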